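/- For v ∈ ℂ^m ⊗ ℂ^n with Schmidt coefficients α₁ ≥ α₂ ≥ ⋯ ≥ 0 (singular values of the associated matrix A_v), the quantity ‖v‖_{s(k)} := sup{ |⟨w, v⟩| : ‖w‖ = 1, SR(w) ≤ k } equals sqrt(α₁² + ⋯ + α_k²). -/

import Mathlib

noncomputable section

set_option maxHeartbeats 1000000

/-- The elementary tensor `a ⊗ b` in `ℂ^m ⊗ ℂ^n ≅ ℂ^(m×n)`. -/
def tens {m n : ℕ} (a : EuclideanSpace ℂ (Fin m)) (b : EuclideanSpace ℂ (Fin n)) :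
    EuclideanSpace ℂ (Fin m × Fin n) :=
  WithLp.toLp 2 (fun p : Fin m × Fin n => a p.1 * b p.2)

/-- The Schmidt rank of `v ∈ ℂ^m ⊗ ℂ^n`. -/
def SR {m n : ℕ} (v : EuclideanSpace ℂ (Fin m × Fin n)) : ℕ :=
  sInf {k | ∃ (a : Fin k → EuclideanSpace ℂ (Fin m)) (b : Fin k → EuclideanSpace ℂ (Fin n)),
    v = ∑ i, tens (a i) (b i)}

/-- If `v` has Schmidt decomposition `v = Σᵢ αᵢ aᵢ ⊗ bᵢ` with orthonormal `{aᵢ}`, `{bᵢ}`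
and decreasingly ordered Schmidt coefficients `αᵢ ≥ 0`, then
`‖v‖_{s(k)} = sup { |⟨w,v⟩| : ‖w‖ = 1, SR(w) ≤ k } = sqrt(α₁² + ⋯ + α_k²)`. -/
lemma sum_dite_pad {M : Type*} [AddCommMonoid M] {K k : ℕ} (hK : K ≤ k) (f : Fin K → M) :
    ∑ j : Fin k, (if h : (j : ℕ) < K then f ⟨j, h⟩ else 0) = ∑ j : Fin K, f j := by
  classical
  set g : ℕ → M := fun i => if h : i < K then f ⟨i, h⟩ else 0 with hg
  calc ∑ j : Fin k, (if h : (j : ℕ) < K then f ⟨j, h⟩ else 0) = ∑ j : Fin k, g ↑j := rfl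
    _ = ∑ i ∈ Finset.range k, g i := Fin.sum_univ_eq_sum_range g k
    _ = ∑ i ∈ Finset.range K, g i := by
        refine (Finset.sum_subset (Finset.range_subset_range.2 hK) fun i _ hi => ?_).symm
        simp only [Finset.mem_range] at hi
        simp [hg, hi]
    _ = ∑ j : Fin K, g ↑j := (Fin.sum_univ_eq_sum_range g K).symm
    _ = ∑ j : Fin K, f j := by
        refine Finset.sum_congr rfl fun j _ => ?_
        simp [hg, j.isLt]

lemma euc_sum_apply {ι κ : Type*} [Fintype ι] (f : ι → EuclideanSpace ℂ κ) (p : κ) :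
    (∑ i, f i) p = ∑ i, f i p := by
  classical
  induction (Finset.univ : Finset ι) using Finset.induction with
  | empty => rfl
  | insert x s h ih => simp [Finset.sum_insert h, ih]

lemma tens_zero_left {m n : ℕ} (b : EuclideanSpace ℂ (Fin n)) :
    tens (0 : EuclideanSpace ℂ (Fin m)) b = 0 := by
  ext p
  show (0 : EuclideanSpace ℂ (Fin m)) p.1 * b p.2 = _
  simp

lemma exists_decomp_k {m n k : ℕ} (w : EuclideanSpace ℂ (Fin m × Fin n)) (hw2 : SR w ≤ k) :
    ∃ (xx : Fin k → EuclideanSpace ℂ (Fin m)) (yy : Fin k → EuclideanSpace ℂ (Fin n)),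
      w = ∑ j, tens (xx j) (yy j) := by
  classical
  have hne : {K | ∃ (aa : Fin K → EuclideanSpace ℂ (Fin m))
      (bb : Fin K → EuclideanSpace ℂ (Fin n)), w = ∑ j, tens (aa j) (bb j)}.Nonempty := by
    refine ⟨m * n, fun j => EuclideanSpace.single (finProdFinEquiv.symm j).1
        (w (finProdFinEquiv.symm j)),
      fun j => EuclideanSpace.single (finProdFinEquiv.symm j).2 1, ?_⟩
    ext p
    rw [euc_sum_apply]
    rw [show ∑ j : Fin (m * n), tens (EuclideanSpace.single (finProdFinEquiv.symm j).1
          (w (finProdFinEquiv.symm j)))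
        (EuclideanSpace.single (finProdFinEquiv.symm j).2 1) p
      = ∑ q : Fin m × Fin n, tens (EuclideanSpace.single q.1 (w q))
          (EuclideanSpace.single q.2 1) p from
      Fintype.sum_equiv finProdFinEquiv.symm _ _ (fun j => rfl)]
    have h0 : ∀ q ∈ Finset.univ, q ≠ p → tens (EuclideanSpace.single q.1 (w q))
        (EuclideanSpace.single q.2 1) p = 0 := by
      intro q _ hq
      show EuclideanSpace.single q.1 (w q) p.1 * EuclideanSpace.single q.2 1 p.2 = 0
      rcases (show p.1 ≠ q.1 ∨ p.2 ≠ q.2 by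
        by_contra hcon
        push_neg at hcon
        exact hq (Prod.ext hcon.1.symm hcon.2.symm)) with h | h
      · simp [EuclideanSpace.single_apply, h]
      · simp [EuclideanSpace.single_apply, h]
    rw [Finset.sum_eq_single_of_mem p (Finset.mem_univ p) h0]
    symm
    show EuclideanSpace.single p.1 (w p) p.1 * EuclideanSpace.single p.2 1 p.2 = w p
    simp [EuclideanSpace.single_apply]
  obtain ⟨aa, bb, hab⟩ : ∃ (aa : Fin (SR w) → EuclideanSpace ℂ (Fin m))
      (bb : Fin (SR w) → EuclideanSpace ℂ (Fin n)), w = ∑ j, tens (aa j) (bb j) :=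
    Nat.sInf_mem hne
  refine ⟨fun j => if h : (j : ℕ) < SR w then aa ⟨j, h⟩ else 0,
    fun j => if h : (j : ℕ) < SR w then bb ⟨j, h⟩ else 0, ?_⟩
  refine Eq.trans hab (Eq.symm ?_)
  refine Eq.trans (Finset.sum_congr rfl fun j _ => ?_)
    (sum_dite_pad hw2 (fun j => tens (aa j) (bb j)))
  by_cases h : (j : ℕ) < SR w
  · simp [h]
  · simp [h, tens_zero_left]

lemma sum_fin_lt {M : Type*} [AddCommMonoid M] {N k : ℕ} (hk : k ≤ N) (f : Fin N → M) :
    ∑ i : Fin N, (if (i : ℕ) < k then f i else 0) = ∑ j : Fin k, f (Fin.castLE hk j) := by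
  classical
  set g : ℕ → M := fun i => if h : i < k then f (Fin.castLE hk ⟨i, h⟩) else 0 with hg
  calc ∑ i : Fin N, (if (i : ℕ) < k then f i else 0) = ∑ i : Fin N, g ↑i := by
        refine Finset.sum_congr rfl fun i _ => ?_
        by_cases h : (i : ℕ) < k
        · simp only [hg, h, if_true, dif_pos]
          congr 1
        · simp [hg, h]
    _ = ∑ i ∈ Finset.range N, g i := Fin.sum_univ_eq_sum_range g N
    _ = ∑ i ∈ Finset.range k, g i := by
        refine (Finset.sum_subset (Finset.range_subset_range.2 hk) fun i _ hi => ?_).symm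
        simp only [Finset.mem_range] at hi
        simp [hg, hi]
    _ = ∑ j : Fin k, g ↑j := (Fin.sum_univ_eq_sum_range g k).symm
    _ = ∑ j : Fin k, f (Fin.castLE hk j) := by
        refine Finset.sum_congr rfl fun j _ => ?_
        simp only [hg, j.isLt, dif_pos]

lemma maxsum {N k : ℕ} (hk1 : 1 ≤ k) (hk : k ≤ N) (A t : Fin N → ℝ)
    (hA : ∀ i, 0 ≤ A i) (hdec : ∀ i j : Fin N, i ≤ j → A j ≤ A i)
    (ht0 : ∀ i, 0 ≤ t i) (ht1 : ∀ i, t i ≤ 1) (hts : ∑ i, t i ≤ k) :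
    ∑ i : Fin N, A i * t i ≤ ∑ i : Fin N, (if (i : ℕ) < k then A i else 0) := by
  classical
  have hκN : k - 1 < N := by omega
  set κ : Fin N := ⟨k - 1, hκN⟩ with hκ
  set β : ℝ := A κ with hβ
  have hβ0 : 0 ≤ β := hA κ
  have split : ∀ f : Fin N → ℝ, ∑ i : Fin N, f i
      = ∑ i : Fin N, (if (i : ℕ) < k then f i else 0)
        + ∑ i : Fin N, (if (i : ℕ) < k then 0 else f i) := by
    intro f
    rw [← Finset.sum_add_distrib]
    refine Finset.sum_congr rfl fun i _ => ?_
    by_cases h : (i : ℕ) < k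
    · simp [h]
    · simp [h]
  have hcard : ∑ i : Fin N, (if (i : ℕ) < k then (1 : ℝ) else 0) = k := by
    rw [sum_fin_lt hk (fun _ => (1 : ℝ))]; simp
  have step1 : ∑ i : Fin N, (if (i : ℕ) < k then 0 else A i * t i)
      ≤ β * ∑ i : Fin N, (if (i : ℕ) < k then 0 else t i) := by
    rw [Finset.mul_sum]
    refine Finset.sum_le_sum fun i _ => ?_
    by_cases h : (i : ℕ) < k
    · simp [h]
    · simp only [h, if_false]
      exact mul_le_mul_of_nonneg_right (hdec κ i (by simp only [hκ, Fin.le_def]; omega)) (ht0 i)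
  have step2 : ∑ i : Fin N, (if (i : ℕ) < k then 0 else t i)
      ≤ ∑ i : Fin N, (if (i : ℕ) < k then (1 - t i) else 0) := by
    have h1 : ∑ i : Fin N, (if (i : ℕ) < k then t i else 0)
        + ∑ i : Fin N, (if (i : ℕ) < k then 0 else t i) = ∑ i : Fin N, t i := (split t).symm
    have h2 : ∑ i : Fin N, (if (i : ℕ) < k then (1 - t i) else 0)
        = (k : ℝ) - ∑ i : Fin N, (if (i : ℕ) < k then t i else 0) := by
      rw [← hcard, ← Finset.sum_sub_distrib]
      refine Finset.sum_congr rfl fun i _ => ?_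
      by_cases h : (i : ℕ) < k
      · simp [h]
      · simp [h]
    rw [h2]; linarith
  have step3 : β * ∑ i : Fin N, (if (i : ℕ) < k then (1 - t i) else 0)
      ≤ ∑ i : Fin N, (if (i : ℕ) < k then A i * (1 - t i) else 0) := by
    rw [Finset.mul_sum]
    refine Finset.sum_le_sum fun i _ => ?_
    by_cases h : (i : ℕ) < k
    · simp only [h, if_true]
      refine mul_le_mul_of_nonneg_right (hdec i κ ?_) (by linarith [ht1 i])
      simp only [hκ, Fin.le_def]; omega
    · simp [h]
  calc ∑ i : Fin N, A i * t i
      = ∑ i : Fin N, (if (i : ℕ) < k then A i * t i else 0)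
        + ∑ i : Fin N, (if (i : ℕ) < k then 0 else A i * t i) := split _
    _ ≤ ∑ i : Fin N, (if (i : ℕ) < k then A i * t i else 0)
        + β * ∑ i : Fin N, (if (i : ℕ) < k then 0 else t i) := by linarith
    _ ≤ ∑ i : Fin N, (if (i : ℕ) < k then A i * t i else 0)
        + β * ∑ i : Fin N, (if (i : ℕ) < k then (1 - t i) else 0) := by
        nlinarith [step2]
    _ ≤ ∑ i : Fin N, (if (i : ℕ) < k then A i * t i else 0)
        + ∑ i : Fin N, (if (i : ℕ) < k then A i * (1 - t i) else 0) := by linarith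
    _ = ∑ i : Fin N, (if (i : ℕ) < k then A i else 0) := by
        rw [← Finset.sum_add_distrib]
        refine Finset.sum_congr rfl fun i _ => ?_
        by_cases h : (i : ℕ) < k
        · simp only [h, if_true]; ring
        · simp [h]

lemma inner_tens {m n : ℕ} (u a : EuclideanSpace ℂ (Fin m)) (z b : EuclideanSpace ℂ (Fin n)) :
    (inner ℂ (tens u z) (tens a b) : ℂ) = inner ℂ u a * inner ℂ z b := by
  simp only [PiLp.inner_apply, RCLike.inner_apply, tens, Fintype.sum_prod_type, Finset.sum_mul,
    Finset.mul_sum, map_mul]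
  rw [Finset.sum_comm]
  exact Finset.sum_congr rfl fun i _ => Finset.sum_congr rfl fun j _ => by ring

lemma tens_smul_left {m n : ℕ} (c : ℂ) (a : EuclideanSpace ℂ (Fin m))
    (b : EuclideanSpace ℂ (Fin n)) : tens (c • a) b = c • tens a b := by
  ext p
  show (c • a) p.1 * b p.2 = c • (a p.1 * b p.2)
  simp [mul_assoc]

lemma tens_smul_right {m n : ℕ} (c : ℂ) (a : EuclideanSpace ℂ (Fin m))
    (b : EuclideanSpace ℂ (Fin n)) : tens a (c • b) = c • tens a b := by
  ext p
  show a p.1 * (c • b) p.2 = c • (a p.1 * b p.2)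
  simp; ring

lemma tens_sum_left {m n N : ℕ} (f : Fin N → EuclideanSpace ℂ (Fin m))
    (b : EuclideanSpace ℂ (Fin n)) : tens (∑ i, f i) b = ∑ i, tens (f i) b := by
  ext p
  show (∑ i, f i) p.1 * b p.2 = (∑ i, tens (f i) b) p
  rw [euc_sum_apply, euc_sum_apply, Finset.sum_mul]
  rfl

lemma tens_sum_right {m n N : ℕ} (a : EuclideanSpace ℂ (Fin m))
    (f : Fin N → EuclideanSpace ℂ (Fin n)) : tens a (∑ i, f i) = ∑ i, tens a (f i) := by
  ext p
  show a p.1 * (∑ i, f i) p.2 = (∑ i, tens a (f i)) p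
  rw [euc_sum_apply, euc_sum_apply, Finset.mul_sum]
  rfl

lemma ub_lemma {m n k : ℕ} (hk1 : 1 ≤ k) (hk2 : k ≤ min m n)
    (v : EuclideanSpace ℂ (Fin m × Fin n))
    (α : Fin (min m n) → ℝ)
    (a : Fin (min m n) → EuclideanSpace ℂ (Fin m))
    (b : Fin (min m n) → EuclideanSpace ℂ (Fin n))
    (ha : Orthonormal ℂ a) (hb : Orthonormal ℂ b)
    (hαpos : ∀ i, 0 ≤ α i) (hαdec : ∀ i j, i ≤ j → α j ≤ α i)
    (hv : v = ∑ i, (α i : ℂ) • tens (a i) (b i))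
    (w : EuclideanSpace ℂ (Fin m × Fin n)) (hw1 : ‖w‖ = 1)
    (xx : Fin k → EuclideanSpace ℂ (Fin m)) (yy : Fin k → EuclideanSpace ℂ (Fin n))
    (hxy : w = ∑ j, tens (xx j) (yy j)) :
    ‖(inner ℂ w v : ℂ)‖
      ≤ Real.sqrt (∑ i : Fin (min m n), if (i : ℕ) < k then α i ^ 2 else 0) := by
  classical
  have hinnerT : ∀ w₀ : EuclideanSpace ℂ (Fin m × Fin n),
      (inner ℂ w₀ v : ℂ) = ∑ i, (α i : ℂ) * inner ℂ w₀ (tens (a i) (b i)) := by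
    intro w₀
    rw [hv, inner_sum]
    exact Finset.sum_congr rfl fun i _ => by rw [inner_smul_right]
  set U : Submodule ℂ (EuclideanSpace ℂ (Fin m)) := Submodule.span ℂ (Set.range xx) with hU
  set d : ℕ := Module.finrank ℂ U with hd'
  have hdk : d ≤ k := by
    calc d ≤ (Set.range xx).toFinset.card := finrank_span_le_card (Set.range xx)
      _ ≤ Fintype.card (Fin k) := by
          rw [Set.toFinset_card]
          exact Fintype.card_range_le xx
      _ = k := Fintype.card_fin k
  set o := stdOrthonormalBasis ℂ U with ho
  set u : Fin d → EuclideanSpace ℂ (Fin m) := fun l => (U.subtypeₗᵢ) (o l) with hu'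
  have hu : Orthonormal ℂ u := o.orthonormal.comp_linearIsometry U.subtypeₗᵢ
  have huite := orthonormal_iff_ite.mp hu
  have hmem : ∀ j, xx j ∈ U := fun j => Submodule.subset_span ⟨j, rfl⟩
  set c : Fin k → Fin d → ℂ := fun j l => o.repr ⟨xx j, hmem j⟩ l with hc
  have hx : ∀ j, xx j = ∑ l, c j l • u l := by
    intro j
    have h1 := o.sum_repr ⟨xx j, hmem j⟩
    calc xx j = ((⟨xx j, hmem j⟩ : U) : EuclideanSpace ℂ (Fin m)) := rfl
      _ = ((∑ l, o.repr ⟨xx j, hmem j⟩ l • o l : U) : EuclideanSpace ℂ (Fin m)) := by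
          rw [h1]
      _ = ∑ l, c j l • u l := by
          rw [Submodule.coe_sum]
          rfl
  set z : Fin d → EuclideanSpace ℂ (Fin n) := fun l => ∑ j, c j l • yy j with hz'
  have hwz : w = ∑ l, tens (u l) (z l) := by
    calc w = ∑ j, tens (xx j) (yy j) := hxy
      _ = ∑ j, ∑ l, c j l • tens (u l) (yy j) := by
          refine Finset.sum_congr rfl fun j _ => ?_
          rw [hx j, tens_sum_left]
          exact Finset.sum_congr rfl fun l _ => tens_smul_left _ _ _
      _ = ∑ l, ∑ j, c j l • tens (u l) (yy j) := Finset.sum_comm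
      _ = ∑ l, tens (u l) (z l) := by
          refine Finset.sum_congr rfl fun l _ => ?_
          rw [show z l = ∑ j, c j l • yy j from rfl, tens_sum_right]
          exact Finset.sum_congr rfl fun j _ => (tens_smul_right _ _ _).symm
  have hz2 : ∑ l, ‖z l‖ ^ 2 = 1 := by
    have h1 : (inner ℂ w w : ℂ) = ∑ l, inner ℂ (z l) (z l) := by
      rw [hwz, sum_inner]
      refine Finset.sum_congr rfl fun l _ => ?_
      rw [inner_sum]
      rw [show ∑ l', (inner ℂ (tens (u l) (z l)) (tens (u l') (z l')) : ℂ)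
          = ∑ l', (if l = l' then (1 : ℂ) else 0) * inner ℂ (z l) (z l') from
        Finset.sum_congr rfl fun l' _ => by rw [inner_tens, huite]]
      rw [Finset.sum_eq_single_of_mem l (Finset.mem_univ l)
        (fun l' _ h => by simp [Ne.symm h])]
      simp
    have h2 : (inner ℂ w w : ℂ) = ((1 : ℝ) : ℂ) := by
      rw [inner_self_eq_norm_sq_to_K, hw1]
      norm_num
    have h3 : ((∑ l, ‖z l‖ ^ 2 : ℝ) : ℂ) = ((1 : ℝ) : ℂ) := by
      rw [← h2, h1]
      push_cast
      exact Finset.sum_congr rfl fun l _ => by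
        rw [inner_self_eq_norm_sq_to_K]
        norm_cast
    exact_mod_cast h3
  set g : Fin d → EuclideanSpace ℂ (Fin n) :=
    fun l => ∑ i, ((α i : ℂ) * inner ℂ (u l) (a i)) • b i with hg'
  have hinner1 : (inner ℂ w v : ℂ) = ∑ l, inner ℂ (z l) (g l) := by
    rw [hwz, sum_inner]
    refine Finset.sum_congr rfl fun l _ => ?_
    rw [hinnerT, hg']
    rw [show (inner ℂ (z l) (∑ i, ((α i : ℂ) * inner ℂ (u l) (a i)) • b i) : ℂ)
        = ∑ i, ((α i : ℂ) * inner ℂ (u l) (a i)) * inner ℂ (z l) (b i) from by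
      rw [inner_sum]
      exact Finset.sum_congr rfl fun i _ => by rw [inner_smul_right]]
    refine Finset.sum_congr rfl fun i _ => ?_
    rw [inner_tens]
    ring
  have hgnorm : ∀ l, ‖g l‖ ^ 2 = ∑ i, α i ^ 2 * ‖(inner ℂ (u l) (a i) : ℂ)‖ ^ 2 := by
    intro l
    have h1 : (inner ℂ (g l) (g l) : ℂ)
        = ∑ i, (starRingEnd ℂ) ((α i : ℂ) * inner ℂ (u l) (a i)) *
            ((α i : ℂ) * inner ℂ (u l) (a i)) :=
      hb.inner_sum _ _ _
    have h2 : (inner ℂ (g l) (g l) : ℂ) = ((‖g l‖ ^ 2 : ℝ) : ℂ) := by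
      rw [inner_self_eq_norm_sq_to_K]; norm_cast
    have h3 : ((‖g l‖ ^ 2 : ℝ) : ℂ)
        = ((∑ i, α i ^ 2 * ‖(inner ℂ (u l) (a i) : ℂ)‖ ^ 2 : ℝ) : ℂ) := by
      rw [← h2, h1]
      push_cast
      refine Finset.sum_congr rfl fun i _ => ?_
      rw [RCLike.conj_mul, norm_mul, Complex.norm_real, Real.norm_eq_abs,
        abs_of_nonneg (hαpos i)]
      norm_cast
      congr 1
      exact mul_pow _ _ _
    exact_mod_cast h3
  have ht1 : ∀ i, ∑ l, ‖(inner ℂ (u l) (a i) : ℂ)‖ ^ 2 ≤ 1 := by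
    intro i
    have h := hu.sum_inner_products_le (a i) (s := Finset.univ)
    rwa [ha.1 i, one_pow] at h
  have ht2 : ∑ i, ∑ l, ‖(inner ℂ (u l) (a i) : ℂ)‖ ^ 2 ≤ (k : ℝ) := by
    rw [Finset.sum_comm]
    calc ∑ l, ∑ i, ‖(inner ℂ (u l) (a i) : ℂ)‖ ^ 2
        ≤ ∑ _l : Fin d, (1 : ℝ) := by
          refine Finset.sum_le_sum fun l _ => ?_
          have h1 : ∑ i, ‖(inner ℂ (a i) (u l) : ℂ)‖ ^ 2 ≤ ‖u l‖ ^ 2 :=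
            ha.sum_inner_products_le (u l) (s := Finset.univ)
          rw [hu.1 l, one_pow] at h1
          calc ∑ i, ‖(inner ℂ (u l) (a i) : ℂ)‖ ^ 2
              = ∑ i, ‖(inner ℂ (a i) (u l) : ℂ)‖ ^ 2 :=
                Finset.sum_congr rfl fun i _ => by rw [← norm_inner_symm]
            _ ≤ 1 := h1
      _ = d := by simp
      _ ≤ (k : ℝ) := by exact_mod_cast hdk
  calc ‖(inner ℂ w v : ℂ)‖ = ‖(inner ℂ w v : ℂ)‖ := rfl
    _ = ‖∑ l, (inner ℂ (z l) (g l) : ℂ)‖ := by rw [hinner1]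
    _ ≤ ∑ l, ‖(inner ℂ (z l) (g l) : ℂ)‖ := norm_sum_le _ _
    _ ≤ ∑ l, ‖z l‖ * ‖g l‖ := Finset.sum_le_sum fun l _ => norm_inner_le_norm _ _
    _ ≤ Real.sqrt (∑ l, ‖z l‖ ^ 2) * Real.sqrt (∑ l, ‖g l‖ ^ 2) :=
        Real.sum_mul_le_sqrt_mul_sqrt _ _ _
    _ = Real.sqrt (∑ l, ‖g l‖ ^ 2) := by rw [hz2]; simp
    _ ≤ Real.sqrt (∑ i : Fin (min m n), if (i : ℕ) < k then α i ^ 2 else 0) := by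
        refine Real.sqrt_le_sqrt ?_
        calc ∑ l, ‖g l‖ ^ 2 = ∑ l, ∑ i, α i ^ 2 * ‖(inner ℂ (u l) (a i) : ℂ)‖ ^ 2 :=
            Finset.sum_congr rfl fun l _ => hgnorm l
          _ = ∑ i, α i ^ 2 * ∑ l, ‖(inner ℂ (u l) (a i) : ℂ)‖ ^ 2 := by
              rw [Finset.sum_comm]
              exact Finset.sum_congr rfl fun i _ => by rw [Finset.mul_sum]
          _ ≤ ∑ i : Fin (min m n), (if (i : ℕ) < k then α i ^ 2 else 0) :=
              maxsum hk1 hk2 (fun i => α i ^ 2)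
                (fun i => ∑ l, ‖(inner ℂ (u l) (a i) : ℂ)‖ ^ 2)
                (fun i => by positivity)
                (fun i j hij => by
                  have h1 := hαdec i j hij
                  have h2 := hαpos j
                  show α j ^ 2 ≤ α i ^ 2
                  nlinarith)
                (fun i => Finset.sum_nonneg fun l _ => by positivity)
                ht1 ht2

theorem stmt8 {m n k : ℕ} (hk1 : 1 ≤ k) (hk2 : k ≤ min m n)
    (v : EuclideanSpace ℂ (Fin m × Fin n))
    (α : Fin (min m n) → ℝ)
    (a : Fin (min m n) → EuclideanSpace ℂ (Fin m))
    (b : Fin (min m n) → EuclideanSpace ℂ (Fin n))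
    (ha : Orthonormal ℂ a) (hb : Orthonormal ℂ b)
    (hαpos : ∀ i, 0 ≤ α i) (hαdec : ∀ i j, i ≤ j → α j ≤ α i)
    (hv : v = ∑ i, (α i : ℂ) • tens (a i) (b i)) :
    sSup {x : ℝ | ∃ w : EuclideanSpace ℂ (Fin m × Fin n),
        ‖w‖ = 1 ∧ SR w ≤ k ∧ x = ‖(inner ℂ w v : ℂ)‖} =
      Real.sqrt (∑ i : Fin (min m n), if (i : ℕ) < k then α i ^ 2 else 0) := by
  classical
  set Q : ℝ := ∑ i : Fin (min m n), if (i : ℕ) < k then α i ^ 2 else 0 with hQ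
  have hQ0 : 0 ≤ Q := Finset.sum_nonneg fun i _ => by positivity
  set S : ℝ := Real.sqrt Q with hS
  have hS0 : 0 ≤ S := Real.sqrt_nonneg _
  have hSsq : S ^ 2 = Q := Real.sq_sqrt hQ0
  set 𝒮 : Set ℝ := {x : ℝ | ∃ w : EuclideanSpace ℂ (Fin m × Fin n),
      ‖w‖ = 1 ∧ SR w ≤ k ∧ x = ‖(inner ℂ w v : ℂ)‖} with h𝒮
  have haite := orthonormal_iff_ite.mp ha
  have hbite := orthonormal_iff_ite.mp hb
  have hT : Orthonormal ℂ (fun i => tens (a i) (b i)) := by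
    rw [orthonormal_iff_ite]
    intro i j
    rw [inner_tens, haite, hbite]
    by_cases h : i = j
    · simp [h]
    · simp [h]
  have hinnerT : ∀ w₀ : EuclideanSpace ℂ (Fin m × Fin n),
      (inner ℂ w₀ v : ℂ) = ∑ i, (α i : ℂ) * inner ℂ w₀ (tens (a i) (b i)) := by
    intro w₀
    rw [hv, inner_sum]
    exact Finset.sum_congr rfl fun i _ => by rw [inner_smul_right]
  have hub : ∀ x ∈ 𝒮, x ≤ S := by
    rintro x ⟨w, hw1, hw2, rfl⟩
    obtain ⟨xx, yy, hxy⟩ := exists_decomp_k w hw2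
    exact ub_lemma hk1 hk2 v α a b ha hb hαpos hαdec hv w hw1 xx yy hxy
  have hk0 : (0 : ℕ) < min m n := lt_of_lt_of_le hk1 hk2
  have hmem : S ∈ 𝒮 := by
    by_cases hSpos : 0 < S
    · set φ : Fin (min m n) → ℂ := fun i => if (i : ℕ) < k then (α i : ℂ) else 0 with hφ
      set w₁ : EuclideanSpace ℂ (Fin m × Fin n) := ∑ i, φ i • tens (a i) (b i) with hw₁
      have hinner11 : (inner ℂ w₁ w₁ : ℂ) = ((Q : ℝ) : ℂ) := by
        rw [hw₁, hT.inner_sum, hQ]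
        push_cast
        refine Finset.sum_congr rfl fun i _ => ?_
        by_cases h : (i : ℕ) < k
        · simp only [hφ, h, if_true]
          rw [Complex.conj_ofReal]
          norm_cast
          ring
        · simp [hφ, h]
      have hnw₁ : ‖w₁‖ = S := by
        have h1 : ((‖w₁‖ ^ 2 : ℝ) : ℂ) = ((Q : ℝ) : ℂ) := by
          rw [← hinner11, inner_self_eq_norm_sq_to_K]
          norm_cast
        have h2 : ‖w₁‖ ^ 2 = Q := by exact_mod_cast h1
        rw [hS, ← h2, Real.sqrt_sq (norm_nonneg _)]
      set w₀ : EuclideanSpace ℂ (Fin m × Fin n) := ((S : ℂ)⁻¹) • w₁ with hw₀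
      have hnw₀ : ‖w₀‖ = 1 := by
        rw [hw₀, norm_smul, hnw₁]
        rw [show ‖((S : ℂ)⁻¹)‖ = S⁻¹ by
          rw [norm_inv, Complex.norm_real, Real.norm_eq_abs, abs_of_nonneg hS0]]
        field_simp
      have hSRw₀ : SR w₀ ≤ k := by
        refine Nat.sInf_le ?_
        refine ⟨fun j => ((S : ℂ)⁻¹ * φ (Fin.castLE hk2 j)) • a (Fin.castLE hk2 j),
          fun j => b (Fin.castLE hk2 j), ?_⟩
        rw [hw₀, hw₁, Finset.smul_sum]
        rw [show ∑ i, ((S : ℂ)⁻¹ • (φ i • tens (a i) (b i)))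
            = ∑ i : Fin (min m n), (if (i : ℕ) < k then
                (((S : ℂ)⁻¹ * φ i) • tens (a i) (b i)) else 0) from
          Finset.sum_congr rfl fun i _ => by
            by_cases h : (i : ℕ) < k
            · simp only [h, if_true, smul_smul]
            · simp [hφ, h]]
        rw [sum_fin_lt hk2 (fun i => ((S : ℂ)⁻¹ * φ i) • tens (a i) (b i))]
        exact Finset.sum_congr rfl fun j _ => (tens_smul_left _ _ _).symm
      have hinner0v : (inner ℂ w₀ v : ℂ) = ((S : ℝ) : ℂ) := by
        rw [hw₀, inner_smul_left]
        have h1 : (inner ℂ w₁ v : ℂ) = ((Q : ℝ) : ℂ) := by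
          rw [hinnerT w₁]
          rw [show ∑ i, (α i : ℂ) * inner ℂ w₁ (tens (a i) (b i))
              = ∑ i, (α i : ℂ) * (starRingEnd ℂ) (φ i) from
            Finset.sum_congr rfl fun i _ => by
              rw [hw₁, hT.inner_left_fintype]]
          rw [hQ]
          push_cast
          refine Finset.sum_congr rfl fun i _ => ?_
          by_cases h : (i : ℕ) < k
          · simp only [hφ, h, if_true]
            rw [Complex.conj_ofReal]
            norm_cast
            ring
          · simp [hφ, h]
        rw [h1]
        rw [show (starRingEnd ℂ) ((S : ℂ)⁻¹) = ((S : ℂ))⁻¹ by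
          rw [← Complex.ofReal_inv]; exact Complex.conj_ofReal _]
        rw [show ((Q : ℝ) : ℂ) = ((S : ℂ)) ^ 2 by
          rw [← hSsq]; push_cast; ring]
        have hSne : (S : ℂ) ≠ 0 := by
          simp only [ne_eq, Complex.ofReal_eq_zero]
          exact ne_of_gt hSpos
        field_simp
      refine ⟨w₀, hnw₀, hSRw₀, ?_⟩
      rw [hinner0v, Complex.norm_real, Real.norm_eq_abs, abs_of_nonneg hS0]
    · have hSz : S = 0 := le_antisymm (not_lt.mp hSpos) hS0
      have hQz : Q = 0 := by rw [← hSsq, hSz]; ring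
      have hα0 : ∀ i : Fin (min m n), α i = 0 := by
        have hterm : ∀ i ∈ Finset.univ,
            (if ((i : Fin (min m n)) : ℕ) < k then α i ^ 2 else 0) = 0 := by
          refine (Finset.sum_eq_zero_iff_of_nonneg fun i _ => by positivity).mp ?_
          rw [← hQ]; exact hQz
        have h00 : α ⟨0, hk0⟩ = 0 := by
          have h := hterm ⟨0, hk0⟩ (Finset.mem_univ _)
          rw [if_pos (by exact hk1)] at h
          nlinarith [hαpos ⟨0, hk0⟩]
        intro i
        refine le_antisymm ?_ (hαpos i)
        rw [← h00]
        exact hαdec ⟨0, hk0⟩ i (by simp [Fin.le_def])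
      have hvz : v = 0 := by
        rw [hv]
        refine Finset.sum_eq_zero fun i _ => ?_
        rw [hα0 i]
        simp
      set w₂ : EuclideanSpace ℂ (Fin m × Fin n) := tens (a ⟨0, hk0⟩) (b ⟨0, hk0⟩) with hw₂
      have hnw₂ : ‖w₂‖ = 1 := hT.1 ⟨0, hk0⟩
      have hSRw₂ : SR w₂ ≤ k := by
        refine Nat.sInf_le ?_
        refine ⟨fun j => if j = (⟨0, hk1⟩ : Fin k) then a ⟨0, hk0⟩ else 0,
          fun j => b ⟨0, hk0⟩, ?_⟩
        rw [show ∑ j : Fin k, tens (if j = (⟨0, hk1⟩ : Fin k) then a ⟨0, hk0⟩ else 0)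
            (b ⟨0, hk0⟩) = ∑ j : Fin k, (if j = (⟨0, hk1⟩ : Fin k) then w₂ else 0) from
          Finset.sum_congr rfl fun j _ => by
            by_cases h : j = (⟨0, hk1⟩ : Fin k)
            · rw [if_pos h, if_pos h, hw₂]
            · rw [if_neg h, if_neg h, tens_zero_left]]
        rw [Finset.sum_ite_eq' Finset.univ (⟨0, hk1⟩ : Fin k)]
        simp
      refine ⟨w₂, hnw₂, hSRw₂, ?_⟩
      rw [hvz, hSz]
      simp [inner_zero_right]
  exact le_antisymm (csSup_le ⟨S, hmem⟩ hub) (le_csSup ⟨S, hub⟩ hmem)
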